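/- Let C be a group and φ an automorphism of C, and let A = C ⋊_φ ℤ be the semidirect product in which the generator 1 ∈ ℤ acts on C by φ. Then the double of A along (the canonical copy of) C is isomorphic to the semidirect product C ⋊ F, where F is the free group of rank two with basis s, s̄ and both s and s̄ act on C by the automorphism φ. -/

import Mathlib

open Monoid SemidirectProduct

section Aux

variable (C : Type*) [Group C] (φ : MulAut C)

local notation "A" => C ⋊[zpowersHom (MulAut C) φ] Multiplicative ℤ
local notation "G" => C ⋊[FreeGroup.lift (fun _ : Bool => φ)] FreeGroup Bool

private lemma liftφ_of (b : Bool) : FreeGroup.lift (fun _ : Bool => φ) (FreeGroup.of b) = φ :=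
  FreeGroup.lift_apply_of

/-- The map `A →* G` for each copy. -/
private def fwd (b : Bool) : (C ⋊[zpowersHom (MulAut C) φ] Multiplicative ℤ) →* G :=
  SemidirectProduct.lift inl (zpowersHom _ (inr (FreeGroup.of b))) (by
    intro g
    refine MonoidHom.ext fun c => ?_
    simp only [MonoidHom.comp_apply, MulEquiv.coe_toMonoidHom, MulAut.conj_apply,
      zpowersHom_apply]
    have h1 : (φ ^ Multiplicative.toAdd g : MulAut C) c =
        (FreeGroup.lift (fun _ : Bool => φ))
          ((FreeGroup.of b) ^ Multiplicative.toAdd g) c := by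
      rw [map_zpow, liftφ_of]
    rw [h1, inl_aut, map_inv, map_zpow])

private lemma fwd_comp_inl (b : Bool) : (fwd C φ b).comp inl = inl := by
  refine MonoidHom.ext fun c => ?_; simp [fwd]

/-- Forward homomorphism from the pushout. -/
private def Φ : Monoid.PushoutI (fun _ : Bool =>
    (SemidirectProduct.inl : C →* C ⋊[zpowersHom (MulAut C) φ] Multiplicative ℤ)) →* G :=
  PushoutI.lift (fwd C φ) inl (fwd_comp_inl C φ)

private lemma conj_base (g : FreeGroup Bool) (c : C) :
    PushoutI.base (fun _ : Bool =>
        (SemidirectProduct.inl : C →* C ⋊[zpowersHom (MulAut C) φ] Multiplicative ℤ))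
        ((FreeGroup.lift (fun _ : Bool => φ) g) c) =
      FreeGroup.lift (fun b : Bool => PushoutI.of
          (φ := fun _ : Bool => (SemidirectProduct.inl : C →* A)) b
          (inr (Multiplicative.ofAdd 1))) g *
        PushoutI.base _ c *
        (FreeGroup.lift (fun b : Bool => PushoutI.of
          (φ := fun _ : Bool => (SemidirectProduct.inl : C →* A)) b
          (inr (Multiplicative.ofAdd 1))) g)⁻¹ := by
  induction g using FreeGroup.induction_on generalizing c with
  | C1 => simp
  | of b =>
    have hpure : (pure b : FreeGroup Bool) = FreeGroup.of b := rfl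
    rw [FreeGroup.lift_apply_of]
    have : (inl (φ c) : A) = inr (Multiplicative.ofAdd 1) * inl c *
        (inr (Multiplicative.ofAdd 1))⁻¹ := by
      ext <;> simp
    calc PushoutI.base _ (φ c)
        = PushoutI.of (φ := fun _ : Bool => (SemidirectProduct.inl : C →* A)) b
            (inl (φ c)) := (PushoutI.of_apply_eq_base _ b _).symm
      _ = _ := by
          rw [this, map_mul, map_mul, map_inv, PushoutI.of_apply_eq_base,
            FreeGroup.lift_apply_of]
  | inv_of b ih =>
    rw [map_inv]
    have h := ih ((FreeGroup.lift (fun _ : Bool => φ) (FreeGroup.of b))⁻¹ c)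
    rw [MulAut.apply_inv_self] at h
    rw [← map_inv, h, map_inv, map_inv]
    group
  | mul x y ihx ihy =>
    rw [map_mul, map_mul, MulAut.mul_apply, ihx, ihy]
    rw [mul_inv_rev]
    group

/-- Backward homomorphism. -/
private def Ψ : G →* Monoid.PushoutI (fun _ : Bool =>
    (SemidirectProduct.inl : C →* C ⋊[zpowersHom (MulAut C) φ] Multiplicative ℤ)) :=
  SemidirectProduct.lift (PushoutI.base _)
    (FreeGroup.lift (fun b : Bool => PushoutI.of
      (φ := fun _ : Bool => (SemidirectProduct.inl : C →* A)) b
      (inr (Multiplicative.ofAdd 1))))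
    (by
      intro g
      ext c
      simpa using conj_base C φ g c)

end Aux

/-- Let `C` be a group, `φ` an automorphism of `C`, and `A = C ⋊_φ ℤ` the
semidirect product in which `1 ∈ ℤ` acts by `φ`. Then the double of `A` along the canonical
copy of `C` (formalized as the pushout of two copies of the canonical embedding `C →* A`) is
isomorphic to `C ⋊ F`, where `F` is the free group of rank two on `s, s̄` and both `s` and
`s̄` act on `C` by `φ`. -/
theorem double_of_mapping_torus_iso_semidirect_free
    (C : Type*) [Group C] (φ : MulAut C) :
    Nonempty
      ((Monoid.PushoutI (fun _ : Bool =>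
          (SemidirectProduct.inl : C →* C ⋊[zpowersHom (MulAut C) φ] Multiplicative ℤ))) ≃*
        (C ⋊[FreeGroup.lift (fun _ : Bool => φ)] FreeGroup Bool)) := by
  refine ⟨MonoidHom.toMulEquiv (Φ C φ) (Ψ C φ) ?_ ?_⟩
  · apply PushoutI.hom_ext_nonempty
    intro b
    apply SemidirectProduct.hom_ext
    · refine MonoidHom.ext fun c => ?_
      simp [Φ, Ψ, fwd, PushoutI.of_apply_eq_base]
    · apply MonoidHom.ext_mint
      simp [Φ, Ψ, fwd]
  · apply SemidirectProduct.hom_ext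
    · refine MonoidHom.ext fun c => ?_
      simp [Φ, Ψ]
    · refine MonoidHom.ext fun w => ?_
      induction w using FreeGroup.induction_on with
      | C1 => simp
      | of b =>
        simp [Φ, Ψ, fwd]
      | inv_of b ih => simp only [map_inv, ih]
      | mul x y ihx ihy => simp only [map_mul, ihx, ihy]
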